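/- If A₁, A₂ are symmetric n×n matrices and there exists μ ∈ R with μA₁ + A₂ positive definite, then the set F = {x ∈ R^n : x^T A₁ x = 1 and x^T A₂ x ≤ 1} is compact. -/

import Mathlib

open Matrix

/-- The quadratic form `xᵀ A x` on Euclidean space. -/
noncomputable def quadForm {n : ℕ} (A : Matrix (Fin n) (Fin n) ℝ)
    (x : EuclideanSpace ℝ (Fin n)) : ℝ :=
  ∑ i, ∑ j, A i j * x i * x j

lemma quadForm_continuous {n : ℕ} (A : Matrix (Fin n) (Fin n) ℝ) :
    Continuous (quadForm A) := by
  unfold quadForm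
  fun_prop

lemma quadForm_eq_dot {n : ℕ} (A : Matrix (Fin n) (Fin n) ℝ) (x : EuclideanSpace ℝ (Fin n)) :
    quadForm A x = (x : Fin n → ℝ) ⬝ᵥ A.mulVec x := by
  unfold quadForm
  simp [dotProduct, mulVec, Finset.mul_sum]
  congr 1; ext i; congr 1; ext j; ring

lemma quadForm_smul {n : ℕ} (A : Matrix (Fin n) (Fin n) ℝ) (c : ℝ)
    (x : EuclideanSpace ℝ (Fin n)) :
    quadForm A (c • x) = c ^ 2 * quadForm A x := by
  unfold quadForm
  simp [Finset.mul_sum, PiLp.smul_apply, smul_eq_mul]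
  congr 1; ext i; congr 1; ext j; ring

lemma quadForm_comb {n : ℕ} (A₁ A₂ : Matrix (Fin n) (Fin n) ℝ) (μ : ℝ)
    (x : EuclideanSpace ℝ (Fin n)) :
    quadForm (μ • A₁ + A₂) x = μ * quadForm A₁ x + quadForm A₂ x := by
  unfold quadForm
  simp [Matrix.add_apply, Matrix.smul_apply, add_mul, Finset.sum_add_distrib,
    Finset.mul_sum, smul_eq_mul, mul_assoc]

lemma quadForm_zero {n : ℕ} (A : Matrix (Fin n) (Fin n) ℝ) :
    quadForm A (0 : EuclideanSpace ℝ (Fin n)) = 0 := by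
  unfold quadForm
  simp

theorem stmt3 {n : ℕ} (A₁ A₂ : Matrix (Fin n) (Fin n) ℝ) (h1 : A₁ᵀ = A₁) (h2 : A₂ᵀ = A₂)
    (μ : ℝ) (hpd : ∀ x : Fin n → ℝ, x ≠ 0 → 0 < x ⬝ᵥ (μ • A₁ + A₂).mulVec x) :
    IsCompact {x : EuclideanSpace ℝ (Fin n) | quadForm A₁ x = 1 ∧ quadForm A₂ x ≤ 1} := by
  set Q := μ • A₁ + A₂ with hQ
  have hQpos : ∀ x : EuclideanSpace ℝ (Fin n), x ≠ 0 → 0 < quadForm Q x := by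
    intro x hx
    rw [quadForm_eq_dot]
    exact hpd x (by exact fun h => hx (PiLp.ext fun i => congrFun h i))
  have hclosed : IsClosed {x : EuclideanSpace ℝ (Fin n) | quadForm A₁ x = 1 ∧ quadForm A₂ x ≤ 1} := by
    rw [Set.setOf_and]
    exact (isClosed_eq (quadForm_continuous A₁) continuous_const).inter
      (isClosed_le (quadForm_continuous A₂) continuous_const)
  rcases Nat.eq_zero_or_pos n with rfl | hn
  · -- n = 0 : the set is empty
    convert isCompact_empty
    ext x
    simp only [Set.mem_setOf_eq, Set.mem_empty_iff_false, iff_false]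
    rintro ⟨h, -⟩
    unfold quadForm at h
    simpa using h
  · -- n > 0 : bounded via min on sphere
    apply Metric.isCompact_of_isClosed_isBounded hclosed
    -- min of quadForm Q on the unit sphere
    obtain ⟨x₀, hx₀mem, hmin⟩ := (isCompact_sphere (0 : EuclideanSpace ℝ (Fin n)) 1).exists_isMinOn
      ⟨EuclideanSpace.single ⟨0, hn⟩ (1:ℝ), by simp⟩ ((quadForm_continuous Q).continuousOn)
    have hx₀norm : ‖x₀‖ = 1 := by simpa using hx₀mem
    set c := quadForm Q x₀ with hc
    have hcpos : 0 < c := hQpos x₀ (by intro h; rw [h] at hx₀norm; simp at hx₀norm)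
    have key : ∀ x ∈ {x : EuclideanSpace ℝ (Fin n) | quadForm A₁ x = 1 ∧ quadForm A₂ x ≤ 1},
        ‖x‖ ≤ Real.sqrt ((μ + 1) / c) := by
      rintro x ⟨hx1, hx2⟩
      have hxne : x ≠ 0 := by
        intro h; rw [h, quadForm_zero] at hx1; norm_num at hx1
      have hxn : 0 < ‖x‖ := norm_pos_iff.mpr hxne
      have hu : (‖x‖⁻¹ • x) ∈ Metric.sphere (0 : EuclideanSpace ℝ (Fin n)) 1 := by
        simp [norm_smul, abs_of_pos (inv_pos.mpr hxn), inv_mul_cancel₀ hxn.ne']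
      have h1' : c ≤ quadForm Q (‖x‖⁻¹ • x) := hmin hu
      rw [quadForm_smul] at h1'
      have hupper : quadForm Q x ≤ μ + 1 := by
        rw [quadForm_comb, hx1]
        linarith
      have h2' : c * ‖x‖ ^ 2 ≤ quadForm Q x := by
        have := mul_le_mul_of_nonneg_right h1' (by positivity : (0:ℝ) ≤ ‖x‖ ^ 2)
        calc c * ‖x‖ ^ 2 ≤ (‖x‖⁻¹ ^ 2 * quadForm Q x) * ‖x‖ ^ 2 := this
          _ = quadForm Q x := by field_simp
      have : ‖x‖ ^ 2 ≤ (μ + 1) / c := by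
        rw [le_div_iff₀ hcpos]
        nlinarith
      calc ‖x‖ = Real.sqrt (‖x‖ ^ 2) := by rw [Real.sqrt_sq hxn.le]
        _ ≤ Real.sqrt ((μ + 1) / c) := Real.sqrt_le_sqrt this
    exact isBounded_iff_forall_norm_le.mpr ⟨_, key⟩
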